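/- Suppose rank(H_Λ) = r < ∞ and B = {b_1,...,b_r} ⊂ R is such that the r×r matrix (Λ(b_i b_j))_{i,j} is invertible. Then the images of b_1,...,b_r form a basis of the quotient algebra A_Λ = R/I_Λ, i.e., R = ⟨B⟩ ⊕ I_Λ. -/
import Mathlib

open MvPolynomial

/-- The Hankel operator `H_Λ : p ↦ (q ↦ Λ(pq))`. -/
noncomputable def hankelOp (K : Type*) [Field K] (n : ℕ)
    (Λ : Module.Dual K (MvPolynomial (Fin n) K)) :
    MvPolynomial (Fin n) K →ₗ[K] Module.Dual K (MvPolynomial (Fin n) K) :=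
  (LinearMap.mul K (MvPolynomial (Fin n) K)).compr₂ Λ

/-- The kernel ideal `I_Λ = {p : ∀ q, Λ(pq) = 0}`. -/
def hankelIdeal (K : Type*) [Field K] (n : ℕ)
    (Λ : Module.Dual K (MvPolynomial (Fin n) K)) : Ideal (MvPolynomial (Fin n) K) where
  carrier := {p | ∀ q, Λ (p * q) = 0}
  add_mem' := by
    intro a b ha hb q
    rw [Set.mem_setOf_eq] at ha hb
    rw [add_mul, map_add, ha q, hb q, add_zero]
  zero_mem' := by
    intro q
    rw [zero_mul, map_zero]
  smul_mem' := by
    intro c p hp q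
    rw [Set.mem_setOf_eq] at hp
    have h : (c • p) * q = p * (c * q) := by rw [smul_eq_mul]; ring
    rw [h]
    exact hp _

/-- The evaluation functional `1_ζ : p ↦ p(ζ)`. -/
noncomputable def evalDual (K : Type*) [Field K] (n : ℕ) (ζ : Fin n → K) :
    Module.Dual K (MvPolynomial (Fin n) K) :=
  (MvPolynomial.aeval ζ).toLinearMap

/-- If `rank H_Λ = r` and the matrix `(Λ(b_i b_j))` is invertible, then `b_1, ..., b_r`
is a basis of `A_Λ`, i.e. `R = ⟨B⟩ ⊕ I_Λ`. -/
theorem basis_of_invertible_hankel_minor (K : Type*) [Field K] (n r : ℕ)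
    (Λ : Module.Dual K (MvPolynomial (Fin n) K))
    (hfin : Module.Finite K ↥(LinearMap.range (hankelOp K n Λ)))
    (hrank : Module.finrank K ↥(LinearMap.range (hankelOp K n Λ)) = r)
    (b : Fin r → MvPolynomial (Fin n) K)
    (hB : IsUnit (Matrix.of fun i j => Λ (b i * b j)).det) :
    IsCompl (Submodule.span K (Set.range b)) (LinearMap.ker (hankelOp K n Λ)) := by
  classical
  set H := hankelOp K n Λ with hH
  have hHapp : ∀ p q, H p q = Λ (p * q) := fun p q => rfl
  set M : Matrix (Fin r) (Fin r) K := Matrix.of fun i j => Λ (b i * b j) with hMdef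
  have key : ∀ c : Fin r → K, (∀ j, ∑ i, c i * Λ (b i * b j) = 0) → c = 0 := by
    intro c hc
    have h0 : Matrix.vecMul c M = 0 := by
      funext j
      simpa [Matrix.vecMul, dotProduct, hMdef] using hc j
    have h1 := congrArg (fun v => Matrix.vecMul v M⁻¹) h0
    simpa [Matrix.vecMul_vecMul, Matrix.mul_nonsing_inv M hB] using h1
  have hli : LinearIndependent K (fun i => H (b i)) := by
    rw [Fintype.linearIndependent_iff]
    intro c hc i
    have hc' : ∀ j, ∑ i, c i * Λ (b i * b j) = 0 := by
      intro j
      have h2 := DFunLike.congr_fun hc (b j)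
      simpa [hHapp, smul_eq_mul] using h2
    exact congrFun (key c hc') i
  haveI : FiniteDimensional K ↥(LinearMap.range H) := hfin
  have hspan : Submodule.span K (Set.range (fun i => H (b i))) = LinearMap.range H := by
    apply Submodule.eq_of_le_of_finrank_eq
    · rw [Submodule.span_le]
      rintro _ ⟨i, rfl⟩
      exact LinearMap.mem_range_self H (b i)
    · rw [finrank_span_eq_card hli, hrank, Fintype.card_fin]
  constructor
  · rw [Submodule.disjoint_def]
    intro x hx hker
    obtain ⟨c, hc⟩ := Submodule.mem_span_range_iff_exists_fun K |>.mp hx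
    have hc' : ∀ j, ∑ i, c i * Λ (b i * b j) = 0 := by
      intro j
      have h3 : H x (b j) = 0 := by
        rw [LinearMap.mem_ker] at hker
        rw [hker]; rfl
      rw [hHapp] at h3
      rw [← h3, ← hc]
      simp [Finset.sum_mul, smul_eq_mul]
    have : c = 0 := key c hc'
    rw [← hc, this]
    simp
  · rw [codisjoint_iff_le_sup]
    intro p _
    have hp : H p ∈ Submodule.span K (Set.range (fun i => H (b i))) := by
      rw [hspan]; exact LinearMap.mem_range_self H p
    obtain ⟨c, hc⟩ := Submodule.mem_span_range_iff_exists_fun K |>.mp hp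
    refine Submodule.mem_sup.mpr ⟨∑ i, c i • b i, ?_, p - ∑ i, c i • b i, ?_, by abel⟩
    · exact Submodule.sum_mem _ fun i _ => Submodule.smul_mem _ _ (Submodule.subset_span ⟨i, rfl⟩)
    · rw [LinearMap.mem_ker, map_sub, map_sum]
      simp only [map_smul]
      rw [hc, sub_self]
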